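/- Let M be a matroid on the finite ground set V with rank r ≥ 1. Let f : (k+1)^V → ℝ be monotone and orthant submodular with f(0) ≥ 0, let ε ≥ 0, and let f̂ : (k+1)^V → ℝ satisfy |f(x) − f̂(x)| ≤ ε for all x. Let s^{(0)} = 0, and for j = 1, …, r let s^{(j)} = s^{(j−1)}[e_j ↦ i_j], where supp(s^{(j−1)}) ∪ {e_j} is independent in M with e_j ∉ supp(s^{(j−1)}), and Δ_{e_j,i_j} f̂(s^{(j−1)}) ≥ Δ_{e,i} f̂(s^{(j−1)}) for every e ∉ supp(s^{(j−1)}) with supp(s^{(j−1)}) ∪ {e} independent and every i ∈ {1,…,k}. Then for every o ∈ (k+1)^V whose support supp(o) is a basis of M, the output s = s^{(r)} satisfies f(s) ≥ (1/2)·f(o) − (r+1)·ε. -/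
import Mathlib


namespace Stmt10

variable {V : Type*}

/-- A matroid on `V`, given by its collection of independent (finite) subsets. -/
structure FinMatroid (V : Type*) [DecidableEq V] where
  Indep : Finset V → Prop
  indep_empty : Indep ∅
  indep_subset : ∀ ⦃A B : Finset V⦄, A ⊆ B → Indep B → Indep A
  indep_exchange : ∀ ⦃A B : Finset V⦄, Indep A → Indep B → A.card < B.card →
    ∃ x ∈ B \ A, Indep (insert x A)

/-- A basis is a maximal independent set. -/
def FinMatroid.IsBasis [DecidableEq V] (M : FinMatroid V) (B : Finset V) : Prop :=
  M.Indep B ∧ ∀ ⦃A : Finset V⦄, M.Indep A → B ⊆ A → A = B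

/-- Marginal gain `Δ_{e,i} f(x) = f(x[e↦i]) − f(x)`. -/
def marg {k : ℕ} [DecidableEq V] (f : (V → Fin (k+1)) → ℝ)
    (x : V → Fin (k+1)) (e : V) (i : Fin (k+1)) : ℝ :=
  f (Function.update x e i) - f x

/-- `x ⪯ y` : `y` agrees with `x` on the support of `x`. -/
def preceq {k : ℕ} (x y : V → Fin (k+1)) : Prop :=
  ∀ e, x e ≠ 0 → y e = x e

def MonotoneK {k : ℕ} [DecidableEq V] (f : (V → Fin (k+1)) → ℝ) : Prop :=
  ∀ x : V → Fin (k+1), ∀ e, x e = 0 → ∀ i : Fin (k+1), i ≠ 0 →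
    0 ≤ marg f x e i

def OrthantSubmodular {k : ℕ} [DecidableEq V] (f : (V → Fin (k+1)) → ℝ) : Prop :=
  ∀ x y : V → Fin (k+1), preceq x y → ∀ e, y e = 0 → ∀ i : Fin (k+1), i ≠ 0 →
    marg f x e i ≥ marg f y e i

/-- The support of `x` as a finset. -/
def suppF {k : ℕ} [Fintype V] [DecidableEq V] (x : V → Fin (k+1)) : Finset V :=
  Finset.univ.filter (fun v => x v ≠ 0)

lemma mem_suppF {k : ℕ} [Fintype V] [DecidableEq V] {x : V → Fin (k+1)} {v : V} :
    v ∈ suppF x ↔ x v ≠ 0 := by simp [suppF]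

/-- Augmentation: an independent set can be grown inside `A ∪ B` to the size of `B`. -/
lemma augment [DecidableEq V] (M : FinMatroid V) :
    ∀ n (A B : Finset V), B.card - A.card = n → M.Indep A → M.Indep B → A.card ≤ B.card →
      ∃ A', A ⊆ A' ∧ A' ⊆ A ∪ B ∧ M.Indep A' ∧ A'.card = B.card := by
  intro n
  induction n with
  | zero =>
      intro A B h hA hB hle
      exact ⟨A, subset_rfl, Finset.subset_union_left, hA, by omega⟩
  | succ n ih =>
      intro A B h hA hB hle
      have hlt : A.card < B.card := by omega
      obtain ⟨x, hx, hind⟩ := M.indep_exchange hA hB hlt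
      rw [Finset.mem_sdiff] at hx
      have hcard : (insert x A).card = A.card + 1 := Finset.card_insert_of_notMem hx.2
      obtain ⟨A', h1, h2, h3, h4⟩ := ih (insert x A) B (by omega) hind hB (by omega)
      refine ⟨A', (Finset.subset_insert _ _).trans h1, h2.trans ?_, h3, h4⟩
      intro v hv
      rcases Finset.mem_union.1 hv with hv | hv
      · rcases Finset.mem_insert.1 hv with rfl | hv
        · exact Finset.mem_union_right _ hx.1
        · exact Finset.mem_union_left _ hv
      · exact Finset.mem_union_right _ hv

lemma card_le_rank [DecidableEq V] (M : FinMatroid V) (B0 : Finset V) (hB0 : M.IsBasis B0)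
    (A : Finset V) (hA : M.Indep A) : A.card ≤ B0.card := by
  by_contra h
  push_neg at h
  obtain ⟨x, hx, hind⟩ := M.indep_exchange hB0.1 hA h
  rw [Finset.mem_sdiff] at hx
  have := hB0.2 hind (Finset.subset_insert _ _)
  exact hx.2 (this ▸ Finset.mem_insert_self x B0)

lemma basis_of_card [DecidableEq V] (M : FinMatroid V) (B0 : Finset V) (hB0 : M.IsBasis B0)
    (A : Finset V) (hA : M.Indep A) (hc : B0.card ≤ A.card) : M.IsBasis A := by
  refine ⟨hA, fun C hC hsub => ?_⟩
  exact (Finset.eq_of_subset_of_card_le hsub ((card_le_rank M B0 hB0 C hC).trans hc)).symm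

/-- Basis exchange: replace some `y ∈ B \ S` by `e`. -/
lemma exchange_basis [DecidableEq V] (M : FinMatroid V) (B S : Finset V) (e : V)
    (hB : M.IsBasis B) (hS : S ⊆ B) (he : e ∉ S) (hind : M.Indep (insert e S)) :
    ∃ y ∈ B, y ∉ S ∧ (e ∈ B → y = e) ∧ M.IsBasis (insert e (B.erase y)) := by
  by_cases heB : e ∈ B
  · exact ⟨e, heB, he, fun _ => rfl, by rwa [Finset.insert_erase heB]⟩
  · have hcard : (insert e S).card ≤ B.card := card_le_rank M B hB _ hind
    obtain ⟨I, hI1, hI2, hI3, hI4⟩ :=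
      augment M (B.card - (insert e S).card) (insert e S) B rfl hind hB.1 hcard
    have hIbasis : M.IsBasis I := basis_of_card M B hB I hI3 (le_of_eq hI4.symm)
    have heI : e ∈ I := hI1 (Finset.mem_insert_self e S)
    have hIe : I.erase e ⊆ B := by
      intro v hv
      rw [Finset.mem_erase] at hv
      rcases Finset.mem_union.1 (hI2 hv.2) with h | h
      · rcases Finset.mem_insert.1 h with rfl | h
        · exact absurd rfl hv.1
        · exact hS h
      · exact h
    have hpos : 0 < I.card := Finset.card_pos.2 ⟨e, heI⟩
    have hcard1 : (B \ I.erase e).card = 1 := by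
      rw [Finset.card_sdiff_of_subset hIe, Finset.card_erase_of_mem heI, hI4]
      omega
    obtain ⟨y, hy⟩ := Finset.card_eq_one.1 hcard1
    have hyB : y ∈ B ∧ y ∉ I.erase e := by
      have : y ∈ B \ I.erase e := hy ▸ Finset.mem_singleton_self y
      exact Finset.mem_sdiff.1 this
    have hye : y ≠ e := fun h => heB (h ▸ hyB.1)
    have hyI : y ∉ I := fun h => hyB.2 (Finset.mem_erase.2 ⟨hye, h⟩)
    have hyS : y ∉ S := fun h =>
      hyI (hI1 (Finset.mem_insert_of_mem h))
    have hBI : B.erase y = I.erase e := by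
      apply Finset.eq_of_subset_of_card_le
      · intro v hv
        rw [Finset.mem_erase] at hv ⊢
        by_contra hc
        push_neg at hc
        by_cases hve : v = e
        · exact heB (hve ▸ hv.2)
        · have : v ∈ B \ I.erase e :=
            Finset.mem_sdiff.2 ⟨hv.2, fun hm => hc hve (Finset.mem_erase.1 hm).2⟩
          rw [hy, Finset.mem_singleton] at this
          exact hv.1 this
      · rw [Finset.card_erase_of_mem heI, Finset.card_erase_of_mem hyB.1, hI4]
    have heq : insert e (B.erase y) = I := by
      rw [hBI, Finset.insert_erase heI]
    exact ⟨y, hyB.1, hyS, fun h => absurd h heB, by rw [heq]; exact hIbasis⟩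

/-- Robustness of the greedy algorithm for monotone `k`-submodular maximization
under a matroid constraint, run with a perturbed oracle `f̂`:
`f(s) ≥ (1/2)·f(o) − (r+1)·ε`. -/
theorem stmt10 {k : ℕ} (hk : 1 ≤ k) [Fintype V] [DecidableEq V]
    (M : FinMatroid V) (r : ℕ) (hr1 : 1 ≤ r)
    (hrank : ∀ B : Finset V, M.IsBasis B → B.card = r)
    (f fh : (V → Fin (k+1)) → ℝ)
    (hmono : MonotoneK f) (hos : OrthantSubmodular f)
    (hf0 : 0 ≤ f (fun _ => 0))
    (ε : ℝ) (hε : 0 ≤ ε)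
    (hclose : ∀ x, |f x - fh x| ≤ ε)
    -- the greedy sequence `s^{(0)}, …, s^{(r)}`, choosing pair `(e j, t j)` at step `j`:
    (s : ℕ → V → Fin (k+1)) (e : ℕ → V) (t : ℕ → Fin (k+1))
    (hs0 : s 0 = fun _ => 0)
    (hstep : ∀ j ∈ Finset.Icc 1 r,
      s j = Function.update (s (j-1)) (e j) (t j) ∧
      t j ≠ 0 ∧
      s (j-1) (e j) = 0 ∧
      M.Indep (insert (e j) (suppF (s (j-1)))) ∧
      (∀ v, s (j-1) v = 0 → M.Indep (insert v (suppF (s (j-1)))) →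
        ∀ i : Fin (k+1), i ≠ 0 →
        marg fh (s (j-1)) (e j) (t j) ≥ marg fh (s (j-1)) v i))
    (o : V → Fin (k+1)) (ho : M.IsBasis (suppF o)) :
    f (s r) ≥ (1/2) * f o - ((r : ℝ) + 1) * ε := by
  -- the key invariant, proved by induction on the step index
  have key : ∀ j, j ≤ r → ∃ o' : V → Fin (k+1), preceq (s j) o' ∧ M.IsBasis (suppF o') ∧
      (suppF (s j)).card = j ∧ f o - f o' ≤ fh (s j) - fh (s 0) + 2 * (j : ℝ) * ε := by
    intro j
    induction j with
    | zero =>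
        intro _
        refine ⟨o, ?_, ho, ?_, by simp⟩
        · intro v hv; rw [hs0] at hv; exact absurd rfl hv
        · rw [hs0]
          simp [suppF]
    | succ j ih =>
        intro hj
        obtain ⟨o', hpre, hbasis, hcardj, hineq⟩ := ih (by omega)
        obtain ⟨hsj, ht0, hse0, hindep, hgreedy⟩ :=
          hstep (j+1) (Finset.mem_Icc.2 ⟨by omega, hj⟩)
        rw [Nat.add_sub_cancel] at hsj hse0 hindep hgreedy
        set x := s j with hx
        set ej := e (j+1) with hej
        set tj := t (j+1) with htj
        have hSsub : suppF x ⊆ suppF o' := by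
          intro v hv
          rw [mem_suppF] at hv ⊢
          rw [hpre v hv]; exact hv
        have heS : ej ∉ suppF x := by
          rw [mem_suppF]; simp [hse0]
        obtain ⟨y, hyB, hyS, hye, hbasis'⟩ :=
          exchange_basis M (suppF o') (suppF x) ej hbasis hSsub heS hindep
        set w : V → Fin (k+1) := Function.update o' y 0 with hw
        set o'' : V → Fin (k+1) := Function.update w ej tj with ho''
        have hwy : w y = 0 := Function.update_self _ _ _
        have hwej : w ej = 0 := by
          by_cases h : ej = y
          · rw [h]; exact hwy
          · rw [hw, Function.update_of_ne h]
            by_contra hc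
            have : ej ∈ suppF o' := mem_suppF.2 hc
            exact h (hye this).symm
        have hyne0 : o' y ≠ 0 := mem_suppF.1 hyB
        have hxy0 : x y = 0 := by
          by_contra hc
          exact hyS (mem_suppF.2 hc)
        have hprexw : preceq x w := by
          intro v hv
          have hvy : v ≠ y := fun h => hyS (h ▸ mem_suppF.2 hv)
          rw [hw, Function.update_of_ne hvy]
          exact hpre v hv
        -- f o' - f w ≤ marg f x y (o' y)
        have ho'w : Function.update w y (o' y) = o' := by
          funext v
          by_cases h : v = y
          · subst h; simp
          · rw [Function.update_of_ne h, hw, Function.update_of_ne h]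
        have hsub1 : f o' - f w ≤ marg f x y (o' y) := by
          have h2 : marg f w y (o' y) = f o' - f w := by
            rw [marg, ho'w]
          have h3 := hos x w hprexw y hwy (o' y) hyne0
          rw [h2] at h3
          exact h3
        -- 0 ≤ f o'' - f w
        have hmono1 : 0 ≤ f o'' - f w := hmono w ej hwej tj ht0
        -- compare f and fh margins
        have hcl1 := abs_le.1 (hclose (Function.update x y (o' y)))
        have hcl2 := abs_le.1 (hclose x)
        have hmargcl : marg f x y (o' y) ≤ marg fh x y (o' y) + 2 * ε := by
          rw [marg, marg]; linarith [hcl1.1, hcl1.2, hcl2.1, hcl2.2]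
        -- greedy choice dominates
        have hyindep : M.Indep (insert y (suppF x)) := by
          apply M.indep_subset _ hbasis.1
          intro v hv
          rcases Finset.mem_insert.1 hv with rfl | hv
          · exact hyB
          · exact hSsub hv
        have hgr : marg fh x ej tj ≥ marg fh x y (o' y) :=
          hgreedy y hxy0 hyindep (o' y) hyne0
        -- combine the per-step estimate
        have hstepineq : f o' - f o'' ≤ fh (s (j+1)) - fh x + 2 * ε := by
          have hmeq : marg fh x ej tj = fh (s (j+1)) - fh x := by
            rw [marg, hsj]
          linarith
        refine ⟨o'', ?_, ?_, ?_, ?_⟩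
        · -- preceq (s (j+1)) o''
          intro v hv
          rw [hsj] at hv ⊢
          by_cases h : v = ej
          · subst h
            rw [Function.update_self] at hv ⊢
            rw [ho'', Function.update_self]
          · rw [Function.update_of_ne h] at hv ⊢
            have hvy : v ≠ y := fun hh => hyS (hh ▸ mem_suppF.2 hv)
            rw [ho'', Function.update_of_ne h, hw, Function.update_of_ne hvy]
            exact hpre v hv
        · -- suppF o'' is a basis
          have : suppF o'' = insert ej ((suppF o').erase y) := by
            ext v
            rw [mem_suppF, Finset.mem_insert, Finset.mem_erase, mem_suppF]
            by_cases h : v = ej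
            · subst h
              rw [ho'', Function.update_self]
              simp [ht0]
            · rw [ho'', Function.update_of_ne h, hw]
              by_cases hvy : v = y
              · subst hvy
                simp [h]
              · rw [Function.update_of_ne hvy]
                simp [h, hvy]
          rw [this]
          exact hbasis'
        · -- card of support
          have hsupp : suppF (s (j+1)) = insert ej (suppF x) := by
            ext v
            rw [mem_suppF, Finset.mem_insert, mem_suppF, hsj]
            by_cases h : v = ej
            · subst h
              rw [Function.update_self]
              simp [ht0]
            · rw [Function.update_of_ne h]
              simp [h]
          rw [hsupp, Finset.card_insert_of_notMem heS, hcardj]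
        · -- the numeric estimate
          push_cast
          linarith
  obtain ⟨o', hpre, hbasis, hcard, hineq⟩ := key r le_rfl
  -- at the end the greedy solution has full support, so it equals o'
  have hSsub : suppF (s r) ⊆ suppF o' := by
    intro v hv
    rw [mem_suppF] at hv ⊢
    rw [hpre v hv]; exact hv
  have hceq : suppF o' = suppF (s r) :=
    (Finset.eq_of_subset_of_card_le hSsub (by rw [hcard, hrank _ hbasis])).symm
  have hseq : s r = o' := by
    funext v
    by_cases h : s r v = 0
    · rw [h]
      by_contra hc
      have : v ∈ suppF o' := mem_suppF.2 (fun hh => hc hh.symm)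
      rw [hceq, mem_suppF] at this
      exact this h
    · exact (hpre v h).symm
  rw [hseq] at hineq ⊢
  have hcl1 := abs_le.1 (hclose o')
  have hcl2 := abs_le.1 (hclose (s 0))
  have hf00 : 0 ≤ f (s 0) := by rw [hs0]; exact hf0
  rw [ge_iff_le]
  linarith

end Stmt10
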